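/- Let G be a torsion abelian group, F the free commutative monoid on a set Q, and I : G × G → F a map satisfying: I(a,b) = I(b,a); I(a,0) = 0; I(a,b) + I(a+b,c) = I(b,c) + I(a,b+c); and for a ≠ 0, I(a,−a) is neither 0 nor an element of Q. Then G × F with operation (a,f) +_I (b,g) = (a+b, f+g+I(a,b)) is a commutative cancellative monoid whose only unit is (0,0), and every element (0,q) with q ∈ Q is irreducible. -/

import Mathlib

lemma stmt19_aux {Q : Type*} (q : Q) (a b : Q →₀ ℕ) (h : a + b = Finsupp.single q 1) :
    (a = 0 ∧ b = Finsupp.single q 1) ∨ (a = Finsupp.single q 1 ∧ b = 0) := by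
  have hpt : ∀ p, a p + b p = (Finsupp.single q 1 : Q →₀ ℕ) p := by
    intro p; have := DFunLike.congr_fun h p; simpa using this
  have hq := hpt q
  rw [Finsupp.single_eq_same] at hq
  have hother : ∀ p, p ≠ q → a p = 0 ∧ b p = 0 := by
    intro p hp
    have := hpt p
    rw [Finsupp.single_eq_of_ne' (Ne.symm hp)] at this
    omega
  rcases Nat.eq_zero_or_pos (a q) with h0 | h0
  · left
    constructor
    · ext p
      rcases eq_or_ne p q with rfl | hp
      · simpa using h0
      · simpa using (hother p hp).1
    · ext p
      rcases eq_or_ne p q with rfl | hp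
      · simp; omega
      · rw [Finsupp.single_eq_of_ne' (Ne.symm hp)]; exact (hother p hp).2
  · right
    constructor
    · ext p
      rcases eq_or_ne p q with rfl | hp
      · simp; omega
      · rw [Finsupp.single_eq_of_ne' (Ne.symm hp)]; exact (hother p hp).1
    · ext p
      rcases eq_or_ne p q with rfl | hp
      · simp; omega
      · simpa using (hother p hp).2

lemma stmt19_zero {Q : Type*} (a b : Q →₀ ℕ) (h : a + b = 0) : a = 0 ∧ b = 0 := by
  constructor <;> ext p <;>
    · have := DFunLike.congr_fun h p
      simp at this ⊢
      omega

theorem stmt_19 (G : Type*) [AddCommGroup G]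
    (htor : ∀ g : G, ∃ n : ℕ, 0 < n ∧ n • g = 0)
    (Q : Type*) (I : G → G → (Q →₀ ℕ))
    (h1 : ∀ a b : G, I a b = I b a)
    (h2 : ∀ a : G, I a 0 = 0)
    (h3 : ∀ a b c : G, I a b + I (a + b) c = I b c + I a (b + c))
    (h4 : ∀ a : G, a ≠ 0 → I a (-a) ≠ 0 ∧ ∀ q : Q, I a (-a) ≠ Finsupp.single q 1)
    (op : (G × (Q →₀ ℕ)) → (G × (Q →₀ ℕ)) → (G × (Q →₀ ℕ)))
    (hop : ∀ p r, op p r = (p.1 + r.1, p.2 + r.2 + I p.1 r.1)) :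
    (∀ x y, op x y = op y x) ∧
    (∀ x y z, op (op x y) z = op x (op y z)) ∧
    (∀ x, op x (0, 0) = x) ∧
    (∀ x y z, op x y = op x z → y = z) ∧
    (∀ x y, op x y = ((0, 0) : G × (Q →₀ ℕ)) → x = (0, 0) ∧ y = (0, 0)) ∧
    (∀ q : Q, ((0 : G), Finsupp.single q 1) ≠ ((0, 0) : G × (Q →₀ ℕ)) ∧
      ∀ x y, op x y = ((0 : G), Finsupp.single q 1) → x = (0, 0) ∨ y = (0, 0)) := by
  refine ⟨?_, ?_, ?_, ?_, ?_, ?_⟩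
  · intro x y
    rw [hop, hop, h1, add_comm x.1 y.1, add_comm x.2 y.2]
  · intro x y z
    rw [hop, hop, hop, hop]
    refine Prod.ext (by simp [add_assoc]) ?_
    simp only
    have := h3 x.1 y.1 z.1
    calc x.2 + y.2 + I x.1 y.1 + z.2 + I (x.1 + y.1) z.1
        = x.2 + (y.2 + z.2) + (I x.1 y.1 + I (x.1 + y.1) z.1) := by abel
      _ = x.2 + (y.2 + z.2) + (I y.1 z.1 + I x.1 (y.1 + z.1)) := by rw [this]
      _ = x.2 + (y.2 + z.2 + I y.1 z.1) + I x.1 (y.1 + z.1) := by abel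
  · intro x
    rw [hop]
    simp [h2]
  · intro x y z h
    rw [hop, hop] at h
    have hf : x.1 + y.1 = x.1 + z.1 := congrArg Prod.fst h
    have hf1 : y.1 = z.1 := by
      have := add_left_cancel hf; exact this
    have hs : x.2 + y.2 + I x.1 y.1 = x.2 + z.2 + I x.1 z.1 := congrArg Prod.snd h
    rw [hf1] at hs
    have hy2 : y.2 = z.2 := by
      ext p
      have := DFunLike.congr_fun hs p
      simp at this
      omega
    exact Prod.ext hf1 hy2
  · intro x y h
    rw [hop] at h
    have hf : x.1 + y.1 = 0 := congrArg Prod.fst h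
    have hs : x.2 + y.2 + I x.1 y.1 = 0 := congrArg Prod.snd h
    obtain ⟨h12, hI⟩ := stmt19_zero _ _ hs
    obtain ⟨hx2, hy2⟩ := stmt19_zero _ _ h12
    have hy1 : y.1 = -x.1 := eq_neg_of_add_eq_zero_right hf
    have hx1 : x.1 = 0 := by
      by_contra hx1
      exact ((h4 x.1 hx1).1) (by rw [← hy1]; exact hI)
    constructor
    · exact Prod.ext hx1 hx2
    · exact Prod.ext (by rw [hy1, hx1, neg_zero]) hy2
  · intro q
    refine ⟨by simp [Finsupp.single_eq_zero], ?_⟩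
    intro x y h
    rw [hop] at h
    have hf : x.1 + y.1 = 0 := congrArg Prod.fst h
    have hs : x.2 + y.2 + I x.1 y.1 = Finsupp.single q 1 := congrArg Prod.snd h
    have hy1 : y.1 = -x.1 := eq_neg_of_add_eq_zero_right hf
    have hx1 : x.1 = 0 := by
      by_contra hx1
      rcases stmt19_aux q _ _ hs with ⟨_, hI⟩ | ⟨_, hI⟩
      · exact ((h4 x.1 hx1).2 q) (by rw [← hy1]; exact hI)
      · exact ((h4 x.1 hx1).1) (by rw [← hy1]; exact hI)
    have hy1' : y.1 = 0 := by rw [hy1, hx1, neg_zero]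
    rw [hx1, hy1', h2] at hs
    rw [add_zero] at hs
    rcases stmt19_aux q _ _ hs with ⟨hx2, _⟩ | ⟨_, hy2⟩
    · exact Or.inl (Prod.ext hx1 hx2)
    · exact Or.inr (Prod.ext hy1' hy2)
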